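/- arXiv:1606.02247 — 4 statements merged into one kernel-verified Lean document; each statement's English description precedes it below -/
import Mathlib

section
/- Let m ≥ 4, μ = ⌊m/2⌋, and consider UT_m(ℤ) with its standard Mal'cev basis and coordinate functions t_{i,j}. For a subset S ⊆ {2, …, μ}, let w_S = ∏_{i∈S} s_{i,i+1}, the factors taken in increasing order of i. Then for every S ⊆ {2, …, μ} and every i with μ < i < m, one has w_S • t_{i,m} = t_{i,m}, i.e., t_{i,m}(h w_S^{−1}) = t_{i,m}(h) for all h ∈ UT_m(ℤ). -/
open scoped TensorProduct

/-- diagonal entries of a product of two upper triangular matrices -/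
private lemma diag_mul_triangular {m : ℕ} {A B : Matrix (Fin m) (Fin m) ℤ}
    (hA : ∀ i j : Fin m, j < i → A i j = 0) (hB : ∀ i j : Fin m, j < i → B i j = 0)
    (i : Fin m) : (A * B) i i = A i i * B i i := by
  rw [Matrix.mul_apply]
  apply Finset.sum_eq_single
  · intro k _ hk
    rcases lt_or_gt_of_ne hk with h | h
    · rw [hA i k h, zero_mul]
    · rw [hB k i h, mul_zero]
  · intro h; exact absurd (Finset.mem_univ i) h

/-- The group of upper unitriangular `m × m` integer matrices, as a subgroup of the
units of the matrix ring. -/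
def UT (m : ℕ) : Subgroup (Matrix (Fin m) (Fin m) ℤ)ˣ where
  carrier := {A | (∀ i j : Fin m, j < i → A.val i j = 0) ∧ ∀ i : Fin m, A.val i i = 1}
  one_mem' := by
    refine ⟨fun i j hji => ?_, fun i => ?_⟩
    · simp [Matrix.one_apply, (ne_of_lt hji).symm]
    · simp
  mul_mem' := by
    rintro A B ⟨hA1, hA2⟩ ⟨hB1, hB2⟩
    refine ⟨fun i j hji => ?_, fun i => ?_⟩
    · rw [Units.val_mul, Matrix.mul_apply]
      apply Finset.sum_eq_zero
      intro k _
      rcases lt_or_ge k i with h | h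
      · rw [hA1 i k h, zero_mul]
      · rw [hB1 k j (lt_of_lt_of_le hji h), mul_zero]
    · rw [Units.val_mul, diag_mul_triangular hA1 hB1, hA2, hB2, one_mul]
  inv_mem' := by
    rintro A ⟨hA1, hA2⟩
    have hinv : ∀ i j : Fin m, j < i → (A⁻¹).val i j = 0 := by
      haveI : Invertible A.val := A.isUnit.invertible
      have h1 : Matrix.BlockTriangular A.val (id : Fin m → Fin m) := fun i j h => hA1 i j h
      have h2 := Matrix.blockTriangular_inv_of_blockTriangular h1
      intro i j hji
      rw [Matrix.coe_units_inv]
      exact h2 hji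
    refine ⟨hinv, fun i => ?_⟩
    have h3 : ((A⁻¹).val * A.val) i i = (A⁻¹).val i i * A.val i i :=
      diag_mul_triangular hinv hA1 i
    rw [Units.inv_mul] at h3
    rw [hA2] at h3
    simpa [Matrix.one_apply] using h3.symm

/-- The transvection `s_{i,j} = 1 + E_{i,j}` as an element of `UT m`. -/
def sUT {m : ℕ} (i j : Fin m) (hij : i < j) : ↥(UT m) :=
  ⟨⟨Matrix.transvection i j (1 : ℤ), Matrix.transvection i j (-1 : ℤ),
    by rw [Matrix.transvection_mul_transvection_same _ _ (ne_of_lt hij)]; simp,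
    by rw [Matrix.transvection_mul_transvection_same _ _ (ne_of_lt hij)]; simp⟩,
   by
    constructor
    · intro a b hba
      show Matrix.transvection i j (1 : ℤ) a b = 0
      rw [Matrix.transvection, Matrix.add_apply, Matrix.one_apply,
        if_neg (ne_of_gt hba)]
      rw [Matrix.single_apply_of_ne]
      · ring
      · rintro ⟨rfl, rfl⟩
        exact absurd hij (not_lt_of_gt hba)
    · intro a
      show Matrix.transvection i j (1 : ℤ) a a = 1
      rw [Matrix.transvection, Matrix.add_apply, Matrix.one_apply, if_pos rfl]
      rw [Matrix.single_apply_of_ne]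
      · ring
      · rintro ⟨rfl, rfl⟩
        exact lt_irrefl _ hij⟩

/-- The set of index pairs `(i, j)` with `i < j`. -/
abbrev Pears (m : ℕ) := {p : Fin m × Fin m // p.1 < p.2}

/-- The ordered product `a 0 ^ x 0 * a 1 ^ x 1 * ⋯ * a (n-1) ^ x (n-1)`. -/
def malcevProd {G : Type*} [Group G] {n : ℕ} (a : Fin n → G) (x : Fin n → ℤ) : G :=
  ((List.finRange n).map fun i => a i ^ x i).prod

open scoped commutatorElement

/-- `a` is a Mal'cev basis: normal forms are unique and the subgroups
`G_i = ⟨a_i, …, a_n⟩` form a central series. -/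
def IsMalcevBasis {G : Type*} [Group G] {n : ℕ} (a : Fin n → G) : Prop :=
  Function.Bijective (malcevProd a) ∧
    ∀ i : Fin n, ∀ g : G, ∀ h ∈ Subgroup.closure {y | ∃ j : Fin n, i ≤ j ∧ y = a j},
      ⁅g, h⁆ ∈ Subgroup.closure {y | ∃ j : Fin n, i < j ∧ y = a j}


section WSaux

variable {m : ℕ}

lemma UT_tri {A : (Matrix (Fin m) (Fin m) ℤ)ˣ} (hA : A ∈ UT m) :
    ∀ i j : Fin m, j < i → A.val i j = 0 := hA.1

/-- Trivialize all entries outside the lower-right corner block. -/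
def psimat (μ : ℕ) (M : Matrix (Fin m) (Fin m) ℤ) : Matrix (Fin m) (Fin m) ℤ :=
  Matrix.of fun r c =>
    if μ ≤ (r : ℕ) ∧ μ ≤ (c : ℕ) then M r c else (1 : Matrix (Fin m) (Fin m) ℤ) r c

lemma psimat_apply (μ : ℕ) (M : Matrix (Fin m) (Fin m) ℤ) (r c : Fin m) :
    psimat μ M r c =
      if μ ≤ (r : ℕ) ∧ μ ≤ (c : ℕ) then M r c else (1 : Matrix (Fin m) (Fin m) ℤ) r c := rfl

lemma psimat_one (μ : ℕ) : psimat μ (1 : Matrix (Fin m) (Fin m) ℤ) = 1 := by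
  ext r c
  rw [psimat_apply]
  split <;> rfl

lemma psimat_mul (μ : ℕ) {A B : Matrix (Fin m) (Fin m) ℤ}
    (hA : ∀ r c : Fin m, c < r → A r c = 0) :
    psimat μ (A * B) = psimat μ A * psimat μ B := by
  ext r c
  by_cases hr : μ ≤ (r : ℕ)
  · by_cases hc : μ ≤ (c : ℕ)
    · rw [psimat_apply, if_pos ⟨hr, hc⟩]
      simp only [Matrix.mul_apply]
      apply Finset.sum_congr rfl
      intro l _
      by_cases hl : μ ≤ (l : ℕ)
      · rw [psimat_apply, psimat_apply, if_pos ⟨hr, hl⟩, if_pos ⟨hl, hc⟩]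
      · have h1 : A r l = 0 := hA r l (by rw [Fin.lt_def]; omega)
        have h2 : psimat μ A r l = 0 := by
          rw [psimat_apply, if_neg (by tauto)]
          exact Matrix.one_apply_ne (by intro e; rw [e] at hr; exact hl hr)
        rw [h1, h2, zero_mul, zero_mul]
    · have hBc : ∀ l : Fin m, psimat μ B l c = (1 : Matrix (Fin m) (Fin m) ℤ) l c := fun l => by
        rw [psimat_apply, if_neg (by tauto)]
      symm
      calc (psimat μ A * psimat μ B) r c
          = ∑ l : Fin m, psimat μ A r l * (1 : Matrix (Fin m) (Fin m) ℤ) l c := by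
            rw [Matrix.mul_apply]
            exact Finset.sum_congr rfl fun l _ => by rw [hBc l]
        _ = (psimat μ A * (1 : Matrix (Fin m) (Fin m) ℤ)) r c := by rw [Matrix.mul_apply]
        _ = psimat μ A r c := by rw [mul_one]
        _ = (1 : Matrix (Fin m) (Fin m) ℤ) r c := by rw [psimat_apply, if_neg (by tauto)]
        _ = psimat μ (A * B) r c := by rw [psimat_apply, if_neg (by tauto)]
  · have hAr : ∀ l : Fin m, psimat μ A r l = (1 : Matrix (Fin m) (Fin m) ℤ) r l := fun l => by
      rw [psimat_apply, if_neg (by tauto)]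
    symm
    calc (psimat μ A * psimat μ B) r c
        = ∑ l : Fin m, (1 : Matrix (Fin m) (Fin m) ℤ) r l * psimat μ B l c := by
          rw [Matrix.mul_apply]
          exact Finset.sum_congr rfl fun l _ => by rw [hAr l]
      _ = ((1 : Matrix (Fin m) (Fin m) ℤ) * psimat μ B) r c := by rw [Matrix.mul_apply]
      _ = psimat μ B r c := by rw [one_mul]
      _ = (1 : Matrix (Fin m) (Fin m) ℤ) r c := by rw [psimat_apply, if_neg (by tauto)]
      _ = psimat μ (A * B) r c := by rw [psimat_apply, if_neg (by tauto)]

lemma psimat_mem (μ : ℕ) {A : (Matrix (Fin m) (Fin m) ℤ)ˣ} (hA : A ∈ UT m) :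
    (∀ r c : Fin m, c < r → psimat μ A.val r c = 0) ∧ ∀ r : Fin m, psimat μ A.val r r = 1 := by
  constructor
  · intro r c hcr
    rw [psimat_apply]
    split
    · exact hA.1 r c hcr
    · exact Matrix.one_apply_ne (ne_of_gt hcr)
  · intro r
    rw [psimat_apply]
    split
    · exact hA.2 r
    · exact Matrix.one_apply_eq r

/-- The corner-projection endomorphism of `UT m`. -/
def Psi (μ : ℕ) : ↥(UT m) →* ↥(UT m) where
  toFun A :=
    ⟨⟨psimat μ (A : (Matrix (Fin m) (Fin m) ℤ)ˣ).val,
      psimat μ ((A : (Matrix (Fin m) (Fin m) ℤ)ˣ)⁻¹).val,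
      by
        rw [← psimat_mul μ (UT_tri A.prop), ← Units.val_mul, mul_inv_cancel, Units.val_one,
          psimat_one],
      by
        rw [← psimat_mul μ (UT_tri ((UT m).inv_mem A.prop)), ← Units.val_mul, inv_mul_cancel,
          Units.val_one, psimat_one]⟩,
     psimat_mem μ A.prop⟩
  map_one' := Subtype.ext (Units.ext (psimat_one μ))
  map_mul' A B := Subtype.ext (Units.ext (psimat_mul μ (UT_tri A.prop)))

lemma Psi_sUT_of_lt (μ : ℕ) {i j : Fin m} (hij : i < j) (hi : (i : ℕ) < μ) :
    Psi μ (sUT i j hij) = 1 := by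
  apply Subtype.ext
  apply Units.ext
  show psimat μ (Matrix.transvection i j (1 : ℤ)) = (1 : Matrix (Fin m) (Fin m) ℤ)
  ext r c
  rw [psimat_apply]
  split
  · rename_i hrc
    rw [Matrix.transvection, Matrix.add_apply, Matrix.single_apply_of_ne, add_zero]
    rintro ⟨he1, he2⟩
    have e1 : (r : ℕ) = (i : ℕ) := by rw [he1]
    omega
  · rfl

lemma Psi_sUT_of_le (μ : ℕ) {i j : Fin m} (hij : i < j) (hi : μ ≤ (i : ℕ)) :
    Psi μ (sUT i j hij) = sUT i j hij := by
  apply Subtype.ext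
  apply Units.ext
  show psimat μ (Matrix.transvection i j (1 : ℤ)) = Matrix.transvection i j (1 : ℤ)
  ext r c
  rw [psimat_apply]
  split
  · rfl
  · rename_i hrc
    rw [Matrix.transvection, Matrix.add_apply, Matrix.single_apply_of_ne, add_zero]
    rintro ⟨he1, he2⟩
    have e1 : (r : ℕ) = (i : ℕ) := by rw [he1]
    have e2 : (c : ℕ) = (j : ℕ) := by rw [he2]
    have e3 : (i : ℕ) < (j : ℕ) := hij
    exact hrc ⟨by omega, by omega⟩

lemma Psi_malcevProd {n : ℕ} (μ : ℕ) (a : Fin n → ↥(UT m)) (row : Fin n → ℕ)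
    (h1 : ∀ k, Psi μ (a k) = if μ ≤ row k then a k else 1) (x : Fin n → ℤ) :
    Psi μ (malcevProd a x) = malcevProd a fun k => if μ ≤ row k then x k else 0 := by
  unfold malcevProd
  rw [map_list_prod, List.map_map]
  congr 1
  apply List.map_congr_left
  intro k _
  show Psi μ (a k ^ x k) = a k ^ (if μ ≤ row k then x k else 0)
  rw [map_zpow, h1 k]
  by_cases hc : μ ≤ row k
  · rw [if_pos hc, if_pos hc]
  · rw [if_neg hc, if_neg hc, one_zpow, zpow_zero]

lemma posval_inj {m i d i' d' : ℕ} (hd : 1 ≤ d) (hd' : 1 ≤ d') (h : i + d < m)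
    (h' : i' + d' < m)
    (heq : i + ∑ ℓ ∈ Finset.Ico 1 d, (m - ℓ) = i' + ∑ ℓ ∈ Finset.Ico 1 d', (m - ℓ)) :
    i = i' ∧ d = d' := by
  have key : ∀ b b' : ℕ, 1 ≤ b → b < b' →
      (∑ ℓ ∈ Finset.Ico 1 b, (m - ℓ)) + (m - b) ≤ ∑ ℓ ∈ Finset.Ico 1 b', (m - ℓ) := by
    intro b b' hb hbb
    have h2 : ∑ ℓ ∈ Finset.Ico 1 (b + 1), (m - ℓ) = (∑ ℓ ∈ Finset.Ico 1 b, (m - ℓ)) + (m - b) :=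
      Finset.sum_Ico_succ_top hb _
    rw [← h2]
    exact Finset.sum_le_sum_of_subset (Finset.Ico_subset_Ico le_rfl hbb)
  rcases lt_trichotomy d d' with hlt | rfl | hlt
  · have := key d d' hd hlt
    omega
  · exact ⟨by omega, rfl⟩
  · have := key d' d hd' hlt
    omega

lemma card_pears (m : ℕ) : Fintype.card (Pears m) = m * (m - 1) / 2 := by
  have e1 : Fintype.card (Pears m) = Fintype.card (Σ i : Fin m, {j : Fin m // i < j}) :=
    Fintype.card_congr (Equiv.subtypeProdEquivSigmaSubtype fun (i j : Fin m) => i < j)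
  rw [e1, Fintype.card_sigma]
  have e2 : ∀ i : Fin m, Fintype.card {j : Fin m // i < j} = m - 1 - (i : ℕ) := by
    intro i
    rw [Fintype.card_subtype]
    have e : Finset.filter (fun j => i < j) Finset.univ = Finset.Ioi i := by
      ext j
      simp
    rw [e, Fin.card_Ioi]
  calc ∑ i : Fin m, Fintype.card {j : Fin m // i < j}
      = ∑ i : Fin m, (m - 1 - (i : ℕ)) := Finset.sum_congr rfl fun i _ => e2 i
    _ = ∑ k ∈ Finset.range m, (m - 1 - k) := Fin.sum_univ_eq_sum_range _ m
    _ = ∑ k ∈ Finset.range m, k := Finset.sum_range_reflect (fun j => j) m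
    _ = m * (m - 1) / 2 := Finset.sum_range_id m

end WSaux

theorem wS_fixes_coordinates_UT (m : ℕ) (hm : 4 ≤ m)
    (n : ℕ) (hn : n = m * (m - 1) / 2)
    (pos : Pears m → Fin n)
    (hpos : ∀ p : Pears m, (pos p : ℕ) =
      (p.1.1 : ℕ) + ∑ ℓ ∈ Finset.Ico 1 ((p.1.2 : ℕ) - (p.1.1 : ℕ)), (m - ℓ))
    (a : Fin n → ↥(UT m)) (ha : ∀ p : Pears m, a (pos p) = sUT p.1.1 p.1.2 p.2)
    (hmal : IsMalcevBasis a)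
    (t : Fin n → ↥(UT m) → ℚ)
    (ht : ∀ (x : Fin n → ℤ) (k : Fin n), t k (malcevProd a x) = (x k : ℚ)) :
    ∀ S : Finset ℕ, S ⊆ Finset.Ico 1 (m / 2) →
    ∀ i : Fin m, m / 2 ≤ (i : ℕ) → ∀ (hi : (i : ℕ) < m - 1),
    ∀ h : ↥(UT m),
      t (pos ⟨(i, ⟨m - 1, by omega⟩), Fin.lt_def.mpr hi⟩)
          (h * (((Finset.sort S (· ≤ ·)).map fun i0 : ℕ =>
            if h0 : i0 + 1 < m then
              sUT ⟨i0, by omega⟩ ⟨i0 + 1, h0⟩ (Fin.mk_lt_mk.mpr (Nat.lt_succ_self _))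
            else 1).prod)⁻¹) =
        t (pos ⟨(i, ⟨m - 1, by omega⟩), Fin.lt_def.mpr hi⟩) h := by
  intro S hS i hμi hi h
  set μ := m / 2 with hμ
  set w : ↥(UT m) := ((Finset.sort S (· ≤ ·)).map fun i0 : ℕ =>
      if h0 : i0 + 1 < m then
        sUT ⟨i0, by omega⟩ ⟨i0 + 1, h0⟩ (Fin.mk_lt_mk.mpr (Nat.lt_succ_self _))
      else 1).prod with hw_def
  -- `pos` is bijective
  have hposinj : Function.Injective pos := by
    intro p q hpq
    have hv : (pos p : ℕ) = (pos q : ℕ) := by rw [hpq]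
    rw [hpos p, hpos q] at hv
    have hp2 : (p.1.1 : ℕ) < (p.1.2 : ℕ) := p.2
    have hq2 : (q.1.1 : ℕ) < (q.1.2 : ℕ) := q.2
    have hpm : (p.1.2 : ℕ) < m := p.1.2.isLt
    have hqm : (q.1.2 : ℕ) < m := q.1.2.isLt
    have := posval_inj (m := m)
      (i := (p.1.1 : ℕ)) (d := (p.1.2 : ℕ) - (p.1.1 : ℕ))
      (i' := (q.1.1 : ℕ)) (d' := (q.1.2 : ℕ) - (q.1.1 : ℕ))
      (by omega) (by omega) (by omega) (by omega) hv
    have h1 : (p.1.1 : ℕ) = (q.1.1 : ℕ) := this.1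
    have h2 : (p.1.2 : ℕ) = (q.1.2 : ℕ) := by omega
    exact Subtype.ext (Prod.ext_iff.mpr ⟨Fin.ext h1, Fin.ext h2⟩)
  have hposbij : Function.Bijective pos :=
    (Fintype.bijective_iff_injective_and_card pos).2
      ⟨hposinj, by rw [card_pears, Fintype.card_fin, hn]⟩
  obtain ⟨posInv, hleft, hright⟩ := Function.bijective_iff_has_inverse.1 hposbij
  have h1 : ∀ k, Psi μ (a k) =
      if μ ≤ ((posInv k).1.1 : ℕ) then a k else 1 := by
    intro k
    by_cases hc : μ ≤ ((posInv k).1.1 : ℕ)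
    · rw [if_pos hc, ← hright k, ha]
      exact Psi_sUT_of_le μ _ hc
    · rw [if_neg hc, ← hright k, ha]
      exact Psi_sUT_of_lt μ _ (by omega)
  have hw1 : Psi μ w = 1 := by
    rw [hw_def, map_list_prod, List.map_map]
    apply List.prod_eq_one
    intro g hg
    rw [List.mem_map] at hg
    obtain ⟨i0, hi0, rfl⟩ := hg
    have hi0S : i0 ∈ S := (Finset.mem_sort _).1 hi0
    have hio : i0 ∈ Finset.Ico 1 μ := hS hi0S
    rw [Finset.mem_Ico] at hio
    simp only [Function.comp_apply]
    rw [dif_pos (show i0 + 1 < m by omega)]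
    exact Psi_sUT_of_lt μ _ (by simpa using hio.2)
  obtain ⟨x, hx⟩ := hmal.1.surjective h
  obtain ⟨x', hx'⟩ := hmal.1.surjective (h * w⁻¹)
  have hPsiEq : Psi μ (malcevProd a x') = Psi μ (malcevProd a x) := by
    rw [hx, hx', map_mul, map_inv, hw1, inv_one, mul_one]
  rw [Psi_malcevProd μ a (fun k => ((posInv k).1.1 : ℕ)) h1 x',
    Psi_malcevProd μ a (fun k => ((posInv k).1.1 : ℕ)) h1 x] at hPsiEq
  have hmask := hmal.1.injective hPsiEq
  have key : ∀ q : Pears m, μ ≤ (q.1.1 : ℕ) → x' (pos q) = x (pos q) := by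
    intro q hq
    have h0 := congrFun hmask (pos q)
    simp only [hleft q] at h0
    rw [if_pos hq, if_pos hq] at h0
    exact h0
  set p : Pears m := ⟨(i, ⟨m - 1, by omega⟩), Fin.lt_def.mpr hi⟩ with hp
  have hxx : x' (pos p) = x (pos p) := key p hμi
  show t (pos p) (h * w⁻¹) = t (pos p) h
  rw [← hx', ← hx, ht, ht, hxx]
end

section
/- Let m ≥ 4, μ = ⌊m/2⌋, and M = {2, …, m−1}. For each subset S ⊆ {2, …, μ} define the polynomial p_S = ∏_{i∈S}(x_i − 1) · ∏_{i∈M∖S} x_i in ℚ[x_2, …, x_{m−1}]. Then the family {p_S : S ⊆ {2, …, μ}} is linearly independent over ℚ; in particular its span has dimension 2^{μ−1}. -/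
open scoped TensorProduct
open scoped commutatorElement

noncomputable instance fintypeSubsets (t : Finset ℕ) : Fintype {S : Finset ℕ // S ⊆ t} :=
  Fintype.ofEquiv {S : Finset ℕ // S ∈ t.powerset}
    (Equiv.subtypeEquivRight fun _ => Finset.mem_powerset)

lemma cardSubsets (t : Finset ℕ) : Fintype.card {S : Finset ℕ // S ⊆ t} = 2 ^ t.card := by
  rw [Fintype.card_congr (Equiv.subtypeEquivRight fun _ => Finset.mem_powerset).symm]
  rw [Fintype.card_coe, Finset.card_powerset]

theorem pS_linearly_independent (m : ℕ) (hm : 4 ≤ m) (μ : ℕ) (hμ : μ = m / 2) :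
    LinearIndependent ℚ (fun S : {S : Finset ℕ // S ⊆ Finset.Icc 2 μ} =>
      (∏ i ∈ S.1, (MvPolynomial.X i - 1)) *
        ∏ i ∈ Finset.Icc 2 (m - 1) \ S.1, (MvPolynomial.X i : MvPolynomial ℕ ℚ)) ∧
    Module.finrank ℚ ↥(Submodule.span ℚ (Set.range
      (fun S : {S : Finset ℕ // S ⊆ Finset.Icc 2 μ} =>
        (∏ i ∈ S.1, (MvPolynomial.X i - 1)) *
          ∏ i ∈ Finset.Icc 2 (m - 1) \ S.1, (MvPolynomial.X i : MvPolynomial ℕ ℚ)))) =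
      2 ^ (μ - 1) := by
  have hμm : μ ≤ m - 1 := by omega
  have hIcc : Finset.Icc 2 μ ⊆ Finset.Icc 2 (m - 1) := by
    intro i hi
    simp only [Finset.mem_Icc] at hi ⊢
    omega
  set ι := {S : Finset ℕ // S ⊆ Finset.Icc 2 μ} with hι
  set f : ι → MvPolynomial ℕ ℚ := fun S =>
    (∏ i ∈ S.1, (MvPolynomial.X i - 1)) *
      ∏ i ∈ Finset.Icc 2 (m - 1) \ S.1, (MvPolynomial.X i : MvPolynomial ℕ ℚ) with hf
  -- evaluation points
  set v : ι → ℕ → ℚ := fun U i => if i ∈ U.1 then 0 else 1 with hv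
  set L : MvPolynomial ℕ ℚ →ₗ[ℚ] (ι → ℚ) :=
    LinearMap.pi (fun U => (MvPolynomial.aeval (v U)).toLinearMap) with hL
  have key : ∀ S U : ι, L (f S) U = if S = U then (-1 : ℚ) ^ S.1.card else 0 := by
    intro S U
    have hLfU : L (f S) U = MvPolynomial.aeval (v U) (f S) := rfl
    rw [hLfU, hf]
    simp only [map_mul, map_prod, map_sub, MvPolynomial.aeval_X, map_one]
    by_cases hSU : S = U
    · subst hSU
      rw [if_pos rfl]
      have h1 : ∀ i ∈ S.1, v S i - 1 = -1 := by
        intro i hi; simp [hv, hi]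
      have h2 : ∀ i ∈ Finset.Icc 2 (m - 1) \ S.1, v S i = 1 := by
        intro i hi
        rw [Finset.mem_sdiff] at hi
        simp [hv, hi.2]
      rw [Finset.prod_congr rfl h1, Finset.prod_congr rfl h2]
      simp
    · rw [if_neg hSU]
      have : ¬ S.1 ⊆ U.1 ∨ ¬ U.1 ⊆ S.1 := by
        by_contra h
        push_neg at h
        exact hSU (Subtype.ext (Finset.Subset.antisymm h.1 h.2))
      rcases this with h | h
      · obtain ⟨i, hiS, hiU⟩ := Finset.not_subset.mp h
        have : v U i - 1 = 0 := by simp [hv, hiU]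
        rw [Finset.prod_eq_zero hiS this, zero_mul]
      · obtain ⟨i, hiU, hiS⟩ := Finset.not_subset.mp h
        have him : i ∈ Finset.Icc 2 (m - 1) \ S.1 :=
          Finset.mem_sdiff.mpr ⟨hIcc (U.2 hiU), hiS⟩
        have : v U i = 0 := by simp [hv, hiU]
        rw [Finset.prod_eq_zero him this, mul_zero]
  have hli : LinearIndependent ℚ f := by
    apply LinearIndependent.of_comp L
    rw [Fintype.linearIndependent_iff]
    intro c hc U
    have := congrFun hc U
    simp only [Function.comp_apply, Finset.sum_apply, Pi.smul_apply, smul_eq_mul,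
      Pi.zero_apply] at this
    rw [Finset.sum_congr rfl (fun S _ => by rw [key S U])] at this
    simp only [mul_ite, mul_zero, Finset.sum_ite_eq', Finset.mem_univ, if_pos] at this
    rcases mul_eq_zero.mp this with h | h
    · exact h
    · exact absurd h (pow_ne_zero _ (by norm_num))
  refine ⟨hli, ?_⟩
  rw [finrank_span_eq_card hli, cardSubsets, Nat.card_Icc,
    show μ + 1 - 2 = μ - 1 from by omega]
end

section
/- Let G be a group with a Mal'cev basis (a_1, …, a_n) admitting multiplication polynomials q_1, …, q_n ∈ ℚ[x_1,…,x_n, y_1,…,y_n]. For a polynomial f ∈ ℚ[x_1, …, x_n], let f̂ : G → ℚ be the function defined by f̂(a_1^{x_1}⋯a_n^{x_n}) = f(x_1, …, x_n). Then the ℚ-linear span of the orbit {g • f̂ : g ∈ G} (where (g • f̂)(h) = f̂(h g^{−1})) is a finite-dimensional ℚ-vector space. -/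
open scoped TensorProduct
open scoped commutatorElement

theorem orbit_span_finite_dimensional (G : Type*) [Group G]
    (n : ℕ) (a : Fin n → G) (hmal : IsMalcevBasis a)
    (q : Fin n → MvPolynomial (Fin n ⊕ Fin n) ℚ)
    (hq : ∀ x y : Fin n → ℤ, ∃ z : Fin n → ℤ,
      malcevProd a x * malcevProd a y = malcevProd a z ∧
      ∀ i : Fin n, (z i : ℚ) =
        MvPolynomial.eval (Sum.elim (fun j => (x j : ℚ)) fun j => (y j : ℚ)) (q i))
    (f : MvPolynomial (Fin n) ℚ) (F : G → ℚ)
    (hF : ∀ x : Fin n → ℤ,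
      F (malcevProd a x) = MvPolynomial.eval (fun i => (x i : ℚ)) f) :
    Module.Finite ℚ ↥(Submodule.span ℚ
      {h : G → ℚ | ∃ g : G, h = fun z => F (z * g⁻¹)}) := by
  classical
  obtain ⟨hbij, -⟩ := hmal
  set e := Equiv.ofBijective (malcevProd a) hbij with he
  set P : MvPolynomial (Fin n ⊕ Fin n) ℚ := MvPolynomial.bind₁ q f with hP
  set φ : ((Fin n ⊕ Fin n) →₀ ℕ) → (G → ℚ) :=
    fun d z => ∏ i : Fin n, ((e.symm z i : ℚ)) ^ d (Sum.inl i) with hφ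
  have key : {h : G → ℚ | ∃ g : G, h = fun z => F (z * g⁻¹)} ⊆
      ↑(Submodule.span ℚ (φ '' ↑P.support)) := by
    rintro h ⟨g, rfl⟩
    set y := e.symm g⁻¹ with hy
    have hfun : (fun z => F (z * g⁻¹)) =
        ∑ d ∈ P.support,
          (P.coeff d * ∏ i : Fin n, ((y i : ℚ)) ^ d (Sum.inr i)) • φ d := by
      funext z
      set x := e.symm z with hx
      obtain ⟨w, hw1, hw2⟩ := hq x y
      have hz : malcevProd a x = z := e.apply_symm_apply z
      have hg : malcevProd a y = g⁻¹ := e.apply_symm_apply g⁻¹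
      have h1 : F (z * g⁻¹) = MvPolynomial.eval
          (Sum.elim (fun j => (x j : ℚ)) fun j => (y j : ℚ)) P := by
        rw [← hz, ← hg, hw1, hF w]
        have : (fun i => (w i : ℚ)) =
            fun i => MvPolynomial.eval
              (Sum.elim (fun j => (x j : ℚ)) fun j => (y j : ℚ)) (q i) := by
          funext i; exact hw2 i
        rw [this, hP]
        exact (MvPolynomial.eval₂Hom_bind₁ (RingHom.id ℚ) _ q f).symm
      rw [h1, MvPolynomial.eval_eq']
      simp only [Finset.sum_apply, Pi.smul_apply, smul_eq_mul]
      refine Finset.sum_congr rfl fun d _ => ?_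
      rw [Fintype.prod_sum_type]
      simp only [Sum.elim_inl, Sum.elim_inr, hφ]
      ring
    rw [hfun]
    refine Submodule.sum_mem _ fun d hd => Submodule.smul_mem _ _ ?_
    exact Submodule.subset_span ⟨d, hd, rfl⟩
  have hle : Submodule.span ℚ {h : G → ℚ | ∃ g : G, h = fun z => F (z * g⁻¹)} ≤
      Submodule.span ℚ (φ '' ↑P.support) := Submodule.span_le.2 key
  haveI : FiniteDimensional ℚ (Submodule.span ℚ (φ '' ↑P.support)) :=
    FiniteDimensional.span_of_finite ℚ ((P.support.finite_toSet).image φ)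
  exact Submodule.finiteDimensional_of_le hle
end

section
/- Let G be a group with a Mal'cev basis (a_1, …, a_n) admitting multiplication polynomials q_1, …, q_n ∈ ℚ[x_1,…,x_n, y_1,…,y_n], and let t_1, …, t_n : G → ℚ be the coordinate functions. Then the Nickel module V, i.e., the ℚ-linear span of {g • t_k : g ∈ G, 1 ≤ k ≤ n}, is a finite-dimensional ℚ-vector space, it is invariant under the G-action (g • f)(h) = f(h g^{−1}), and this action is faithful: the induced group homomorphism from G to the group of ℚ-linear automorphisms of V is injective. -/
open scoped TensorProduct
open scoped commutatorElement

theorem nickel_module_faithful (G : Type*) [Group G]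
    (n : ℕ) (a : Fin n → G) (hmal : IsMalcevBasis a)
    (q : Fin n → MvPolynomial (Fin n ⊕ Fin n) ℚ)
    (hq : ∀ x y : Fin n → ℤ, ∃ z : Fin n → ℤ,
      malcevProd a x * malcevProd a y = malcevProd a z ∧
      ∀ i : Fin n, (z i : ℚ) =
        MvPolynomial.eval (Sum.elim (fun j => (x j : ℚ)) fun j => (y j : ℚ)) (q i))
    (t : Fin n → G → ℚ)
    (ht : ∀ (x : Fin n → ℤ) (k : Fin n), t k (malcevProd a x) = (x k : ℚ)) :
    Module.Finite ℚ ↥(Submodule.span ℚ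
      {f : G → ℚ | ∃ (g : G) (k : Fin n), f = fun h => t k (h * g⁻¹)}) ∧
    (∀ g : G, ∀ f ∈ Submodule.span ℚ
      {f : G → ℚ | ∃ (g : G) (k : Fin n), f = fun h => t k (h * g⁻¹)},
      (fun h => f (h * g⁻¹)) ∈ Submodule.span ℚ
        {f : G → ℚ | ∃ (g : G) (k : Fin n), f = fun h => t k (h * g⁻¹)}) ∧
    (∀ g : G, (∀ f ∈ Submodule.span ℚ
        {f : G → ℚ | ∃ (g : G) (k : Fin n), f = fun h => t k (h * g⁻¹)},
        ∀ h : G, f (h * g⁻¹) = f h) → g = 1) := by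
  classical
  set S : Set (G → ℚ) :=
    {f : G → ℚ | ∃ (g : G) (k : Fin n), f = fun h => t k (h * g⁻¹)} with hS
  set Φ : ((Fin n ⊕ Fin n) →₀ ℕ) → G → ℚ :=
    fun d h => ∏ i : Fin n, (t i h) ^ (d (Sum.inl i)) with hΦ
  set T : Finset ((Fin n ⊕ Fin n) →₀ ℕ) :=
    Finset.univ.biUnion fun k => (q k).support with hT
  set W : Submodule ℚ (G → ℚ) := Submodule.span ℚ (Φ '' ↑T) with hW
  have hone : malcevProd a (fun _ => (0 : ℤ)) = 1 := by
    simp [malcevProd]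
  -- key expansion
  have key : ∀ f ∈ S, f ∈ W := by
    rintro f ⟨g, k, rfl⟩
    obtain ⟨y, hy⟩ := hmal.1.2 g⁻¹
    have hexp : (fun h => t k (h * g⁻¹)) =
        ∑ d ∈ (q k).support,
          ((q k).coeff d * ∏ j : Fin n, ((y j : ℚ)) ^ (d (Sum.inr j))) • Φ d := by
      funext h
      obtain ⟨x, hx⟩ := hmal.1.2 h
      obtain ⟨z, hz1, hz2⟩ := hq x y
      have : t k (h * g⁻¹) = (z k : ℚ) := by
        rw [← hx, ← hy, hz1, ht]
      rw [this, hz2, MvPolynomial.eval_eq']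
      simp only [Finset.sum_apply, Pi.smul_apply, smul_eq_mul]
      refine Finset.sum_congr rfl fun d _ => ?_
      have hΦd : Φ d h = ∏ i : Fin n, ((x i : ℚ)) ^ (d (Sum.inl i)) := by
        simp only [hΦ]
        refine Finset.prod_congr rfl fun i _ => ?_
        rw [← hx, ht]
      rw [hΦd, Fintype.prod_sum_type]
      simp only [Sum.elim_inl, Sum.elim_inr]
      ring
    rw [hexp]
    refine Submodule.sum_smul_mem _ _ fun d hd => ?_
    exact Submodule.subset_span ⟨d, Finset.mem_coe.mpr (Finset.mem_biUnion.mpr ⟨k, Finset.mem_univ _, hd⟩), rfl⟩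
  have hVW : Submodule.span ℚ S ≤ W := Submodule.span_le.mpr key
  refine ⟨?_, ?_, ?_⟩
  · -- finiteness
    have hWfg : W.FG := Submodule.fg_span (T.finite_toSet.image Φ)
    haveI := isNoetherian_of_fg_of_noetherian W hWfg
    have h1 := IsNoetherian.noetherian
      (Submodule.comap W.subtype (Submodule.span ℚ S))
    have h2 := h1.map W.subtype
    rw [Submodule.map_comap_subtype, inf_eq_right.mpr hVW] at h2
    exact Module.Finite.iff_fg.mpr h2
  · -- invariance
    intro g f hf
    let Tg : (G → ℚ) →ₗ[ℚ] (G → ℚ) :=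
      { toFun := fun f h => f (h * g⁻¹)
        map_add' := fun _ _ => rfl
        map_smul' := fun _ _ => rfl }
    have himg : Tg '' S ⊆ S := by
      rintro _ ⟨f0, ⟨g0, k, rfl⟩, rfl⟩
      refine ⟨g0 * g, k, funext fun h => ?_⟩
      show t k (h * g⁻¹ * g0⁻¹) = t k (h * (g0 * g)⁻¹)
      rw [mul_inv_rev, ← mul_assoc]
    have : Tg f ∈ Submodule.map Tg (Submodule.span ℚ S) :=
      Submodule.mem_map_of_mem hf
    rw [Submodule.map_span] at this
    exact Submodule.span_le.mpr
      (himg.trans Submodule.subset_span) this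
  · -- faithfulness
    intro g hg
    have hzero : ∀ k : Fin n, t k g⁻¹ = 0 := by
      intro k
      have hmem : (fun h => t k (h * (1 : G)⁻¹)) ∈ Submodule.span ℚ S :=
        Submodule.subset_span ⟨1, k, rfl⟩
      have := hg _ hmem 1
      simp only [one_mul, inv_one, mul_one] at this
      rw [this]
      have := ht (fun _ => 0) k
      rw [hone] at this
      simpa using this
    obtain ⟨z, hz⟩ := hmal.1.2 g⁻¹
    have hz0 : z = fun _ => 0 := by
      funext k
      have := hzero k
      rw [← hz, ht] at this
      exact_mod_cast this
    rw [hz0, hone] at hz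
    exact inv_eq_one.mp hz.symm
end
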